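/- Let f be μ-strongly convex and L_f-smooth on ℝ^{d₁}, let A ∈ ℝ^{d₂×d₁} have full row rank, and let β > 0. Define λ̃ = −(1/β)(Aᵀ)† ∇f(x̃) and λ* = −(1/β)(Aᵀ)† ∇f(x*), where (Aᵀ)† is the Moore–Penrose pseudo-inverse. Then ‖λ̃ − λ*‖² ≤ (2L_f/(β² σ_min(AAᵀ))) · ( f(x̃) − f(x*) − ⟨∇f(x*), x̃ − x*⟩ ), where σ_min(AAᵀ) is the smallest eigenvalue of AAᵀ. -/

import Mathlib

open RealInnerProductSpace

lemma hasDerivAt_line {n : ℕ} (f : EuclideanSpace ℝ (Fin n) → ℝ)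
    (hdiff : Differentiable ℝ f) (x v : EuclideanSpace ℝ (Fin n)) (t : ℝ) :
    HasDerivAt (fun s : ℝ => f (x + s • v)) ⟪gradient f (x + t • v), v⟫ t := by
  have hc : HasDerivAt (fun s : ℝ => x + s • v) v t := by
    simpa using ((hasDerivAt_id t).smul_const v).const_add x
  have hf : HasFDerivAt f (InnerProductSpace.toDual ℝ _ (gradient f (x + t • v))) (x + t • v) :=
    (hdiff _).hasGradientAt
  have h : HasDerivAt (fun s : ℝ => f (x + s • v))
      (InnerProductSpace.toDual ℝ _ (gradient f (x + t • v)) v) t := hf.comp_hasDerivAt t hc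
  simpa using h

lemma convex_grad_le {n : ℕ} {f : EuclideanSpace ℝ (Fin n) → ℝ}
    (hconv : ConvexOn ℝ Set.univ f) (hdiff : Differentiable ℝ f)
    (x y : EuclideanSpace ℝ (Fin n)) :
    f x + ⟪gradient f x, y - x⟫ ≤ f y := by
  set φ : ℝ → ℝ := fun s => f (x + s • (y - x)) with hφdef
  have hφconv : ConvexOn ℝ Set.univ φ := by
    have h := hconv.comp_affineMap (AffineMap.lineMap x y : ℝ →ᵃ[ℝ] _)
    have heq : φ = f ∘ (AffineMap.lineMap x y : ℝ →ᵃ[ℝ] _) := by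
      funext s
      simp [hφdef, AffineMap.lineMap_apply, add_comm]
    rw [heq]
    simpa using h
  have hd : HasDerivAt φ ⟪gradient f x, y - x⟫ 0 := by
    have := hasDerivAt_line f hdiff x (y - x) 0
    simpa using this
  have hslope := hφconv.le_slope_of_hasDerivAt (Set.mem_univ (0:ℝ)) (Set.mem_univ (1:ℝ))
    one_pos hd
  have h01 : slope φ 0 1 = f y - f x := by
    rw [slope_def_field]
    have h1 : x + (1:ℝ) • (y - x) = y := by rw [one_smul]; abel
    have h0 : x + (0:ℝ) • (y - x) = x := by simp
    simp [hφdef, h1, h0]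
  rw [h01] at hslope
  linarith

lemma descent_lemma {n : ℕ} {f : EuclideanSpace ℝ (Fin n) → ℝ} {Lf : ℝ}
    (hdiff : Differentiable ℝ f)
    (hlip : ∀ x y, ‖gradient f x - gradient f y‖ ≤ Lf * ‖x - y‖)
    (x y : EuclideanSpace ℝ (Fin n)) :
    f y ≤ f x + ⟪gradient f x, y - x⟫ + Lf / 2 * ‖y - x‖ ^ 2 := by
  set v : EuclideanSpace ℝ (Fin n) := y - x with hv
  set c : ℝ := ⟪gradient f x, v⟫ with hc
  set K : ℝ := Lf / 2 * ‖v‖ ^ 2 with hK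
  set ψ : ℝ → ℝ := fun t => f (x + t • v) - t * c - K * t ^ 2 with hψ
  have hd : ∀ t : ℝ, HasDerivAt ψ (⟪gradient f (x + t • v), v⟫ - c - K * (2 * t)) t := by
    intro t
    have h1 := hasDerivAt_line f hdiff x v t
    have h2 : HasDerivAt (fun t : ℝ => t * c) c t := by
      simpa using (hasDerivAt_id t).mul_const c
    have h3 : HasDerivAt (fun t : ℝ => K * t ^ 2) (K * (2 * t)) t := by
      have := (hasDerivAt_pow 2 t).const_mul K
      simpa [mul_comm, mul_assoc] using this
    exact (h1.sub h2).sub h3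
  have hanti : AntitoneOn ψ (Set.Icc (0:ℝ) 1) := by
    apply antitoneOn_of_deriv_nonpos (convex_Icc 0 1)
    · exact fun t _ => (hd t).continuousAt.continuousWithinAt
    · intro t _
      exact (hd t).differentiableAt.differentiableWithinAt
    · intro t ht
      rw [interior_Icc] at ht
      rw [(hd t).deriv]
      have hsub : ⟪gradient f (x + t • v), v⟫ - c = ⟪gradient f (x + t • v) - gradient f x, v⟫ := by
        rw [inner_sub_left]
      have hip : ⟪gradient f (x + t • v) - gradient f x, v⟫ ≤ Lf * t * ‖v‖ ^ 2 := by
        calc ⟪gradient f (x + t • v) - gradient f x, v⟫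
            ≤ ‖gradient f (x + t • v) - gradient f x‖ * ‖v‖ := real_inner_le_norm _ _
          _ ≤ (Lf * ‖x + t • v - x‖) * ‖v‖ :=
              mul_le_mul_of_nonneg_right (hlip _ _) (norm_nonneg _)
          _ = Lf * t * ‖v‖ ^ 2 := by
              have : x + t • v - x = t • v := by abel
              rw [this, norm_smul, Real.norm_eq_abs, abs_of_pos ht.1]
              ring
      have hKe : K * (2 * t) = Lf * t * ‖v‖ ^ 2 := by rw [hK]; ring
      linarith
  have h01 := hanti (Set.left_mem_Icc.2 zero_le_one) (Set.right_mem_Icc.2 zero_le_one) zero_le_one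
  have hψ1 : ψ 1 = f y - c - K := by
    have h1 : x + (1:ℝ) • v = y := by rw [one_smul, hv]; abel
    rw [one_smul] at h1
    simp [hψ, h1]
  have hψ0 : ψ 0 = f x := by simp [hψ]
  rw [hψ1, hψ0] at h01
  linarith

lemma toEuclideanLin_mul_apply {l m n : ℕ} (M : Matrix (Fin l) (Fin m) ℝ)
    (N : Matrix (Fin m) (Fin n) ℝ) (x : EuclideanSpace ℝ (Fin n)) :
    Matrix.toEuclideanLin (M * N) x = Matrix.toEuclideanLin M (Matrix.toEuclideanLin N x) := by
  simp [Matrix.toEuclideanLin_apply, Matrix.mulVec_mulVec]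

lemma real_conjTranspose {m n : ℕ} (A : Matrix (Fin m) (Fin n) ℝ) :
    A.conjTranspose = A.transpose := by
  ext i j
  simp [Matrix.conjTranspose_apply]

lemma rayleigh_lower {n : ℕ} (S : Matrix (Fin n) (Fin n) ℝ) (hS : S.IsHermitian)
    (σ : ℝ) (hσ : ∀ i, σ ≤ hS.eigenvalues i) (w : EuclideanSpace ℝ (Fin n)) :
    σ * ‖w‖ ^ 2 ≤ ⟪w, Matrix.toEuclideanLin S w⟫ := by
  set b := hS.eigenvectorBasis with hb
  have hsym : (Matrix.toEuclideanLin S).IsSymmetric :=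
    Matrix.isHermitian_iff_isSymmetric.1 hS
  have hTb : ∀ j, Matrix.toEuclideanLin S (b j) = hS.eigenvalues j • b j := by
    intro j
    have h := hS.mulVec_eigenvectorBasis j
    ext i
    have := congrFun h i
    simpa [Matrix.toEuclideanLin_apply] using this
  have key : ⟪w, Matrix.toEuclideanLin S w⟫
      = ∑ j, hS.eigenvalues j * (⟪b j, w⟫ * ⟪b j, w⟫) := by
    rw [← b.sum_inner_mul_inner w (Matrix.toEuclideanLin S w)]
    refine Finset.sum_congr rfl fun j _ => ?_
    have h1 : ⟪b j, Matrix.toEuclideanLin S w⟫ = hS.eigenvalues j * ⟪b j, w⟫ := by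
      rw [← hsym (b j) w, hTb j, real_inner_smul_left]
    rw [h1, real_inner_comm w (b j)]
    ring
  have hnorm : ‖w‖ ^ 2 = ∑ j, ⟪b j, w⟫ * ⟪b j, w⟫ := by
    rw [← real_inner_self_eq_norm_sq, ← b.sum_inner_mul_inner w w]
    refine Finset.sum_congr rfl fun j _ => ?_
    rw [real_inner_comm w (b j)]
  rw [key, hnorm, Finset.mul_sum]
  refine Finset.sum_le_sum fun j _ => ?_
  exact mul_le_mul_of_nonneg_right (hσ j) (mul_self_nonneg _)

lemma cocoercivity {n : ℕ} {f : EuclideanSpace ℝ (Fin n) → ℝ} {Lf : ℝ} (hLf : 0 < Lf)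
    (hconv : ConvexOn ℝ Set.univ f) (hdiff : Differentiable ℝ f)
    (hlip : ∀ x y, ‖gradient f x - gradient f y‖ ≤ Lf * ‖x - y‖)
    (x y : EuclideanSpace ℝ (Fin n)) :
    ‖gradient f x - gradient f y‖ ^ 2 ≤ 2 * Lf * (f x - f y - ⟪gradient f y, x - y⟫) := by
  set g : EuclideanSpace ℝ (Fin n) := gradient f x - gradient f y with hg
  set z : EuclideanSpace ℝ (Fin n) := x - Lf⁻¹ • g with hz
  have h1 := convex_grad_le hconv hdiff y z
  have h2 := descent_lemma hdiff hlip x z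
  have hzx : z - x = -(Lf⁻¹ • g) := by rw [hz]; abel
  have hzy : z - y = (x - y) - Lf⁻¹ • g := by rw [hz]; abel
  have hnorm : ‖z - x‖ ^ 2 = Lf⁻¹ ^ 2 * ‖g‖ ^ 2 := by
    rw [hzx, norm_neg, norm_smul, Real.norm_eq_abs, abs_of_pos (by positivity), mul_pow]
  have hix : ⟪gradient f x, z - x⟫ = -(Lf⁻¹ * ⟪gradient f x, g⟫) := by
    rw [hzx, inner_neg_right, real_inner_smul_right]
  have hiy : ⟪gradient f y, z - y⟫ = ⟪gradient f y, x - y⟫ - Lf⁻¹ * ⟪gradient f y, g⟫ := by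
    rw [hzy, inner_sub_right, real_inner_smul_right]
  have hdiffinner : ⟪gradient f x, g⟫ - ⟪gradient f y, g⟫ = ‖g‖ ^ 2 := by
    rw [← inner_sub_left, ← hg, real_inner_self_eq_norm_sq]
  rw [hiy] at h1
  rw [hix, hnorm] at h2
  have hmulsub : Lf⁻¹ * ⟪gradient f x, g⟫ - Lf⁻¹ * ⟪gradient f y, g⟫ = Lf⁻¹ * ‖g‖ ^ 2 := by
    rw [← mul_sub, hdiffinner]
  have hsimp : Lf / 2 * (Lf⁻¹ ^ 2 * ‖g‖ ^ 2) = Lf⁻¹ * ‖g‖ ^ 2 / 2 := by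
    field_simp
  rw [hsimp] at h2
  have key : Lf⁻¹ * ‖g‖ ^ 2 ≤ 2 * (f x - f y - ⟪gradient f y, x - y⟫) := by linarith
  have hfin := mul_le_mul_of_nonneg_left key hLf.le
  have hgid : Lf * (Lf⁻¹ * ‖g‖ ^ 2) = ‖g‖ ^ 2 := by
    field_simp
  rw [hgid] at hfin
  linarith

lemma eigs_pos {d₁ d₂ : ℕ} (A : Matrix (Fin d₂) (Fin d₁) ℝ) (hrank : A.rank = d₂)
    (hH : (A * A.transpose).IsHermitian) (i : Fin d₂) : 0 < hH.eigenvalues i := by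
  have hpsd : (A * A.transpose).PosSemidef := by
    have := Matrix.posSemidef_self_mul_conjTranspose A
    rwa [real_conjTranspose] at this
  have hnn : 0 ≤ hH.eigenvalues i := hpsd.eigenvalues_nonneg i
  rcases hnn.lt_or_eq with h | h
  · exact h
  · exfalso
    have hr : (A * A.transpose).rank = d₂ := by
      rw [Matrix.rank_self_mul_transpose, hrank]
    rw [hH.rank_eq_card_non_zero_eigs] at hr
    have hlt : Fintype.card {j // hH.eigenvalues j ≠ 0} < Fintype.card (Fin d₂) :=
      Fintype.card_subtype_lt (x := i) (by simp [← h])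
    rw [Fintype.card_fin] at hlt
    omega

lemma key_matrix_bound {d₁ d₂ : ℕ} (A : Matrix (Fin d₂) (Fin d₁) ℝ)
    (hH : (A * A.transpose).IsHermitian) (hdet : IsUnit (A * A.transpose).det)
    (σ : ℝ) (hσpos : 0 < σ) (hσ : ∀ i, σ ≤ hH.eigenvalues i)
    (g : EuclideanSpace ℝ (Fin d₁)) :
    ‖Matrix.toEuclideanLin ((A * A.transpose)⁻¹ * A) g‖ ^ 2 ≤ ‖g‖ ^ 2 / σ := by
  set S := A * A.transpose with hS
  set w := Matrix.toEuclideanLin (S⁻¹ * A) g with hw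
  have hSw : Matrix.toEuclideanLin S w = Matrix.toEuclideanLin A g := by
    rw [hw, ← toEuclideanLin_mul_apply, ← Matrix.mul_assoc,
      Matrix.mul_nonsing_inv _ hdet, Matrix.one_mul]
  have hadj : Matrix.toEuclideanLin A.transpose
      = LinearMap.adjoint (Matrix.toEuclideanLin A) := by
    rw [← real_conjTranspose]
    exact Matrix.toEuclideanLin_conjTranspose_eq_adjoint A
  set p := Matrix.toEuclideanLin A.transpose w with hp
  have h1 : ⟪w, Matrix.toEuclideanLin S w⟫ = ‖p‖ ^ 2 := by
    rw [hS, toEuclideanLin_mul_apply, ← hp, ← LinearMap.adjoint_inner_left, ← hadj, ← hp,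
      real_inner_self_eq_norm_sq]
  have h2 : ⟪w, Matrix.toEuclideanLin S w⟫ = ⟪p, g⟫ := by
    rw [hSw, ← LinearMap.adjoint_inner_left, ← hadj, ← hp]
  have hple : ‖p‖ ≤ ‖g‖ := by
    rcases eq_or_lt_of_le (norm_nonneg p) with h | h
    · rw [← h]; exact norm_nonneg g
    · have : ‖p‖ ^ 2 ≤ ‖p‖ * ‖g‖ := by
        rw [← h1, h2]
        exact real_inner_le_norm p g
      nlinarith
  have hray := rayleigh_lower S hH σ hσ w
  have hbound : ⟪w, Matrix.toEuclideanLin S w⟫ ≤ ‖g‖ ^ 2 := by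
    rw [h1]
    nlinarith [norm_nonneg p, norm_nonneg g]
  rw [le_div_iff₀ hσpos, mul_comm]
  exact hray.trans hbound

theorem dual_variable_distance_bound {d₁ d₂ : ℕ} (hd₂ : 0 < d₂)
    (f : EuclideanSpace ℝ (Fin d₁) → ℝ) (μ Lf β : ℝ)
    (hμ : 0 < μ) (hLf : 0 < Lf) (hβ : 0 < β)
    (hdiff : Differentiable ℝ f)
    (hsc : StrongConvexOn Set.univ μ f)
    (hlip : ∀ x y, ‖gradient f x - gradient f y‖ ≤ Lf * ‖x - y‖)
    (A : Matrix (Fin d₂) (Fin d₁) ℝ) (hrank : A.rank = d₂)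
    (hH : (A * A.transpose).IsHermitian)
    (σmin : ℝ) (hσ : σmin = ⨅ i : Fin d₂, hH.eigenvalues i)
    (xt xStar : EuclideanSpace ℝ (Fin d₁))
    (lamt lamStar : EuclideanSpace ℝ (Fin d₂))
    -- since A has full row rank, (Aᵀ)† = (A Aᵀ)⁻¹ A
    (hlamt : lamt = -(1 / β) •
      Matrix.toEuclideanLin ((A * A.transpose)⁻¹ * A) (gradient f xt))
    (hlamStar : lamStar = -(1 / β) •
      Matrix.toEuclideanLin ((A * A.transpose)⁻¹ * A) (gradient f xStar)) :
    ‖lamt - lamStar‖ ^ 2 ≤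
      (2 * Lf / (β ^ 2 * σmin)) *
        (f xt - f xStar - ⟪gradient f xStar, xt - xStar⟫) := by
  haveI : Nonempty (Fin d₂) := ⟨⟨0, hd₂⟩⟩
  have heig : ∀ i, 0 < hH.eigenvalues i := eigs_pos A hrank hH
  have hσle : ∀ i, σmin ≤ hH.eigenvalues i := by
    intro i
    rw [hσ]
    exact ciInf_le (Set.Finite.bddBelow (Set.finite_range _)) i
  have hσpos : 0 < σmin := by
    obtain ⟨i, hi⟩ := exists_eq_ciInf_of_finite (f := fun i => hH.eigenvalues i)
    rw [hσ, ← hi]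
    exact heig i
  have hdet : IsUnit (A * A.transpose).det := by
    have h := hH.det_eq_prod_eigenvalues
    have hpos : 0 < (A * A.transpose).det := by
      rw [h]
      exact Finset.prod_pos fun i _ => heig i
    exact isUnit_iff_ne_zero.2 hpos.ne'
  have hconv : ConvexOn ℝ Set.univ f := hsc.convexOn fun r => by positivity
  set g : EuclideanSpace ℝ (Fin d₁) := gradient f xt - gradient f xStar with hg
  set D : ℝ := f xt - f xStar - ⟪gradient f xStar, xt - xStar⟫ with hD
  have hco : ‖g‖ ^ 2 ≤ 2 * Lf * D := cocoercivity hLf hconv hdiff hlip xt xStar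
  have hlam : lamt - lamStar =
      -(1 / β) • Matrix.toEuclideanLin ((A * A.transpose)⁻¹ * A) g := by
    rw [hlamt, hlamStar, ← smul_sub, ← map_sub]
  have hkey := key_matrix_bound A hH hdet σmin hσpos hσle g
  have hnorm : ‖lamt - lamStar‖ ^ 2
      = (1 / β) ^ 2 * ‖Matrix.toEuclideanLin ((A * A.transpose)⁻¹ * A) g‖ ^ 2 := by
    rw [hlam, norm_smul, Real.norm_eq_abs, abs_neg, abs_of_pos (by positivity), mul_pow]
  rw [hnorm]
  calc (1 / β) ^ 2 * ‖Matrix.toEuclideanLin ((A * A.transpose)⁻¹ * A) g‖ ^ 2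
      ≤ (1 / β) ^ 2 * (‖g‖ ^ 2 / σmin) :=
        mul_le_mul_of_nonneg_left hkey (by positivity)
    _ ≤ (1 / β) ^ 2 * ((2 * Lf * D) / σmin) :=
        mul_le_mul_of_nonneg_left (by gcongr) (by positivity)
    _ = (2 * Lf / (β ^ 2 * σmin)) * D := by field_simp
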